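/- A finite multigraph G is a cactus if and only if no two distinct vertices of G are 3-edge-connected. -/

import Mathlib

namespace TCW

/-- A multigraph: a type of vertices, a type of edges, and an incidence map
assigning to each edge its (unordered) pair of endpoints. -/
structure Multigraph (V E : Type) where
  inc : E → Sym2 V

namespace Multigraph

variable {V E : Type}

/-- The multigraph has no loops. -/
def Loopless (G : Multigraph V E) : Prop := ∀ e : E, ¬ (G.inc e).IsDiag

/-- Walks in a multigraph. -/
inductive Walk (G : Multigraph V E) : V → V → Type where
  | nil (v : V) : Walk G v v
  | cons {u v w : V} (e : E) (he : G.inc e = s(u, v)) (tail : Walk G v w) : Walk G u w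

namespace Walk

variable {G : Multigraph V E}

/-- The list of edges traversed by a walk. -/
def edges : ∀ {u v : V}, G.Walk u v → List E
  | _, _, .nil _ => []
  | _, _, .cons e _ p => e :: p.edges

/-- The list of vertices visited by a walk (in order). -/
def support : ∀ {u v : V}, G.Walk u v → List V
  | u, _, .nil _ => [u]
  | u, _, .cons _ _ p => u :: p.support

/-- A walk is a path if it visits no vertex twice. -/
def IsPath {u v : V} (p : G.Walk u v) : Prop := p.support.Nodup

/-- A closed walk is a cycle if it is nonempty, repeats no edge, and its
vertices are pairwise distinct except for the common endpoint. -/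
def IsCycle {u : V} (p : G.Walk u u) : Prop :=
  p.edges ≠ [] ∧ p.edges.Nodup ∧ p.support.tail.Nodup

end Walk

/-- Two walks are edge-disjoint if they share no edge. -/
def EdgeDisjoint {G : Multigraph V E} {u v u' v' : V}
    (p : G.Walk u v) (q : G.Walk u' v') : Prop :=
  ∀ e : E, e ∈ p.edges → e ∉ q.edges

/-- There exist three pairwise edge-disjoint paths from `u` to `v`. -/
def ThreePaths (G : Multigraph V E) (u v : V) : Prop :=
  ∃ (p₁ p₂ p₃ : G.Walk u v), p₁.IsPath ∧ p₂.IsPath ∧ p₃.IsPath ∧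
    EdgeDisjoint p₁ p₂ ∧ EdgeDisjoint p₁ p₃ ∧ EdgeDisjoint p₂ p₃

/-- `u` and `v` are 3-edge-connected: they are equal or joined by three
pairwise edge-disjoint paths. -/
def ThreeEC (G : Multigraph V E) (u v : V) : Prop := u = v ∨ ThreePaths G u v

/-- The set of edges crossing the vertex set `A` (i.e. the cut `δ(A)`). -/
def delta (G : Multigraph V E) (A : Set V) : Set E :=
  {e | ∃ x y, G.inc e = s(x, y) ∧ x ∈ A ∧ y ∉ A}

/-- The edge sets of cycles of `G`. -/
def cycleSets (G : Multigraph V E) : Set (Set E) :=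
  {C | ∃ (u : V) (p : G.Walk u u), p.IsCycle ∧ C = {e | e ∈ p.edges}}

/-- A cactus: any two distinct cycles are edge-disjoint (equivalently, every
2-connected block is a single edge or a cycle). -/
def IsCactus (G : Multigraph V E) : Prop :=
  ∀ C₁ ∈ G.cycleSets, ∀ C₂ ∈ G.cycleSets, C₁ ≠ C₂ → C₁ ∩ C₂ = ∅

/-- The quotient multigraph of `G` by a setoid on vertices: vertices are the
equivalence classes, and every edge of `G` whose endpoints lie in different
classes gives one edge; edges inside a class are discarded. -/
def quot (G : Multigraph V E) (s : Setoid V) :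
    Multigraph (Quotient s) {e : E // ¬ (Sym2.map (Quotient.mk s) (G.inc e)).IsDiag} :=
  ⟨fun e => Sym2.map (Quotient.mk s) (G.inc e.1)⟩

/-- The setoid of 3-edge-connectedness (its classes are the
3-edge-connected components). -/
def tccSetoid (G : Multigraph V E) : Setoid V := Relation.EqvGen.setoid (ThreeEC G)

/-- `H` is an immersion of `G`: vertices of `H` map injectively to vertices
of `G`, and edges of `H` map to pairwise edge-disjoint paths of `G`, the path
of an edge connecting the images of its endpoints. -/
def IsImmersion {V₁ E₁ V₂ E₂ : Type} (H : Multigraph V₁ E₁) (G : Multigraph V₂ E₂) : Prop :=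
  ∃ (f : V₁ → V₂) (P : E₁ → (u : V₂) × (v : V₂) × G.Walk u v),
    Function.Injective f ∧
    (∀ e : E₁, Sym2.map f (H.inc e) = s((P e).1, (P e).2.1)) ∧
    (∀ e : E₁, (P e).2.2.IsPath) ∧
    (∀ e₁ e₂ : E₁, e₁ ≠ e₂ → EdgeDisjoint (P e₁).2.2 (P e₂).2.2)

section Torso

variable (G : Multigraph V E) (A : Set V)

/-- Two vertices outside `A` are related if joined by a walk avoiding `A`. -/
def compRel (x y : {v : V // v ∉ A}) : Prop :=
  ∃ p : G.Walk x.1 y.1, ∀ w ∈ p.support, w ∉ A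

/-- The setoid whose classes are the connected components of `G - A`. -/
def compSetoid : Setoid {v : V // v ∉ A} := Relation.EqvGen.setoid (G.compRel A)

/-- The component `Z` of `G - A` is attached to the vertex `a ∈ A` by some edge. -/
def Attached (Z : Quotient (G.compSetoid A)) (a : {v : V // v ∈ A}) : Prop :=
  ∃ (e : E) (z : {v : V // v ∉ A}), Quotient.mk (G.compSetoid A) z = Z ∧ G.inc e = s(a.1, z.1)

/-- Edges of `G` with both endpoints in `A`, recorded together with their
endpoints as vertices of the torso. -/
def InnerE : Type :=
  {q : E × Sym2 {v : V // v ∈ A} // G.inc q.1 = Sym2.map Subtype.val q.2}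

/-- Replacement edges: one for each connected component of `G - A` having
exactly two (distinct) neighbours in `A`; its endpoints are those neighbours. -/
def RepE : Type :=
  {q : Quotient (G.compSetoid A) × Sym2 {v : V // v ∈ A} //
    ¬ q.2.IsDiag ∧ {a | a ∈ q.2} = {a | G.Attached A q.1 a}}

/-- The torso of `A` in `G`: keep the edges inside `A`, and for each
connected component of `G - A` with exactly two neighbours in `A`, add a
replacement edge between those neighbours. -/
def torso : Multigraph {v : V // v ∈ A} (G.InnerE A ⊕ G.RepE A) :=
  ⟨Sum.elim (fun q => q.1.2) (fun q => q.1.2)⟩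

end Torso

end Multigraph

open Multigraph

/-- A tree-cut decomposition of `G` with nodes `N`: a tree on `N` together
with a near-partition of the vertices of `G` into bags indexed by `N`. -/
structure TreeCutDecomp (G : Multigraph V E) (N : Type) where
  tree : SimpleGraph N
  isTree : tree.IsTree
  bag : N → Set V
  bag_disjoint : ∀ n₁ n₂ : N, n₁ ≠ n₂ → bag n₁ ∩ bag n₂ = ∅
  bag_covers : ∀ v : V, ∃ t : N, v ∈ bag t

namespace TreeCutDecomp

variable {V E N : Type} {G : Multigraph V E}

/-- The adhesion of the tree edge `n₁n₂`: all edges of `G` whose endpoints lie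
in bags of nodes in different components of the tree minus that edge. -/
def adhE (D : TreeCutDecomp G N) (n₁ n₂ : N) : Set E :=
  {e | ∃ (x y : V) (p q : N), G.inc e = s(x, y) ∧ x ∈ D.bag p ∧ y ∈ D.bag q ∧
    ¬ (D.tree.deleteEdges {s(n₁, n₂)}).Reachable p q}

/-- The adhesion of a node: the union of the adhesions of the bold
(adhesion of size at least 3) tree edges incident to it. -/
def adhN (D : TreeCutDecomp G N) (t : N) : Set E :=
  {e | ∃ n : N, D.tree.Adj n t ∧ 3 ≤ (D.adhE n t).ncard ∧ e ∈ D.adhE n t}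

/-- The decomposition has adhesion-width at most `a`. -/
def AdhWidthLE (D : TreeCutDecomp G N) (a : ℕ) : Prop := ∀ t : N, (D.adhN t).ncard ≤ a

/-- The decomposition has bag-width at most `b`. -/
def BagWidthLE (D : TreeCutDecomp G N) (b : ℕ) : Prop := ∀ t : N, (D.bag t).ncard ≤ b

/-- The adhesion-width: the maximum size of a node adhesion. -/
noncomputable def adhWidth [Fintype N] (D : TreeCutDecomp G N) : ℕ :=
  Finset.univ.sup fun t : N => (D.adhN t).ncard

/-- The bag-width: the maximum size of a bag. -/
noncomputable def bagWidth [Fintype N] (D : TreeCutDecomp G N) : ℕ :=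
  Finset.univ.sup fun t : N => (D.bag t).ncard

open Classical in
/-- GPRTW's width: the maximum over tree edges of the adhesion size, and over
nodes `t` of `|X_t|` plus the number of bold tree edges incident to `t`. -/
noncomputable def gprtwWidth [Fintype N] (D : TreeCutDecomp G N) : ℕ :=
  max
    (Finset.univ.sup fun p : N × N =>
      if D.tree.Adj p.1 p.2 then (D.adhE p.1 p.2).ncard else 0)
    (Finset.univ.sup fun t : N =>
      (D.bag t).ncard + {n : N | D.tree.Adj n t ∧ 3 ≤ (D.adhE n t).ncard}.ncard)

end TreeCutDecomp

/-- A slab in `G`: a connected subgraph (given by its vertex and edge sets)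
together with a nonempty core that is 3-edge-connected in `G`. -/
structure Slab (G : Multigraph V E) where
  verts : Set V
  edgeSet : Set E
  edge_mem : ∀ e ∈ edgeSet, ∀ x ∈ G.inc e, x ∈ verts
  conn : ∀ x ∈ verts, ∀ y ∈ verts, ∃ p : G.Walk x y,
    (∀ w ∈ p.support, w ∈ verts) ∧ (∀ e ∈ p.edges, e ∈ edgeSet)
  core : Set V
  core_sub : core ⊆ verts
  core_nonempty : core.Nonempty
  core_tec : ∀ x ∈ core, ∀ y ∈ core, ThreeEC G x y

/-- A set `F` of edges disconnects a slab if two core vertices lie in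
different components of the slab minus `F`. -/
def Slab.Disconnects {G : Multigraph V E} (F : Set E) (s : Slab G) : Prop :=
  ∃ x ∈ s.core, ∃ y ∈ s.core, ¬ ∃ p : G.Walk x y,
    (∀ w ∈ p.support, w ∈ s.verts) ∧ (∀ e ∈ p.edges, e ∈ s.edgeSet ∧ e ∉ F)

/-- A bramble: a family of pairwise touching slabs (cores pairwise intersect). -/
def IsBramble {G : Multigraph V E} (B : Set (Slab G)) : Prop :=
  ∀ s₁ ∈ B, ∀ s₂ ∈ B, (s₁.core ∩ s₂.core).Nonempty

/-- The bramble has adhesion-order at least `a`: every edge set disconnecting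
all its slabs has at least `a` edges. -/
def AdhOrderGE {G : Multigraph V E} (B : Set (Slab G)) (a : ℕ) : Prop :=
  ∀ F : Set E, (∀ s ∈ B, Slab.Disconnects F s) → a ≤ F.ncard

/-- The bramble has bag-order at least `b`: every core has at least `b` vertices. -/
def BagOrderGE {G : Multigraph V E} (B : Set (Slab G)) (b : ℕ) : Prop :=
  ∀ s ∈ B, b ≤ s.core.ncard

/-- An `(a,b)`-tangle: a consistent orientation of all edge separations of
order `< a` avoiding the collection `Σ_{a,b}` of small stars. An oriented
separation `(A, B)` is represented by its first side `A` (so `B = Aᶜ`). -/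
def IsTangle (G : Multigraph V E) (a b : ℕ) (L : Set (Set V)) : Prop :=
  (∀ A ∈ L, (G.delta A).ncard < a) ∧
  (∀ A : Set V, (G.delta A).ncard < a → (A ∈ L ↔ Aᶜ ∉ L)) ∧
  (∀ A ∈ L, ∀ C ∈ L, (Aᶜ ∩ Cᶜ).Nonempty) ∧
  (∀ σ : Set (Set V), σ ⊆ L → σ.Nonempty →
    (∀ A ∈ σ, ∀ C ∈ σ, A ≠ C → A ∩ C = ∅) →
    ¬ ((⋃ A ∈ {A ∈ σ | 3 ≤ (G.delta A).ncard}, G.delta A).ncard < a ∧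
       (⋂ A ∈ σ, Aᶜ).ncard < b))


namespace Multigraph.Walk

variable {V E : Type} {G : Multigraph V E}

noncomputable local instance : DecidableEq V := Classical.decEq V
noncomputable local instance : DecidableEq E := Classical.decEq E

@[simp] lemma edges_nil (v : V) : (Walk.nil (G := G) v).edges = [] := rfl
@[simp] lemma edges_cons {u v w : V} (e : E) (he : G.inc e = s(u, v)) (p : G.Walk v w) :
    (Walk.cons e he p).edges = e :: p.edges := rfl
@[simp] lemma support_nil (v : V) : (Walk.nil (G := G) v).support = [v] := rfl
@[simp] lemma support_cons {u v w : V} (e : E) (he : G.inc e = s(u, v)) (p : G.Walk v w) :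
    (Walk.cons e he p).support = u :: p.support := rfl

lemma support_eq_cons : ∀ {a b : V} (w : G.Walk a b), w.support = a :: w.support.tail
  | _, _, .nil _ => rfl
  | _, _, .cons _ _ _ => rfl

lemma start_mem_support {a b : V} (w : G.Walk a b) : a ∈ w.support := by
  rw [support_eq_cons]; exact List.mem_cons_self

lemma end_mem_support : ∀ {a b : V} (w : G.Walk a b), b ∈ w.support
  | _, _, .nil v => List.mem_singleton_self v
  | _, _, .cons _ _ p => List.mem_cons_of_mem _ (end_mem_support p)

lemma end_mem_support_tail {a b v : V} (e : E) (he : G.inc e = s(a, v)) (p : G.Walk v b) :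
    b ∈ (Walk.cons e he p).support.tail := by
  simpa using end_mem_support p

lemma eq_of_edges_eq_nil : ∀ {a b : V} (w : G.Walk a b), w.edges = [] → a = b
  | _, _, .nil _, _ => rfl
  | _, _, .cons _ _ _, h => by simp at h

lemma mem_support_of_mem_inc :
    ∀ {a b : V} (w : G.Walk a b) {e : E} {x : V}, e ∈ w.edges → x ∈ G.inc e → x ∈ w.support
  | _, _, .nil _, e, x, he, _ => by simp at he
  | _, _, .cons f hf p, e, x, he, hx => by
    rcases List.mem_cons.mp he with h | h
    · subst h
      rw [hf, Sym2.mem_iff] at hx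
      rcases hx with h | h
      · subst h; exact start_mem_support _
      · subst h; exact List.mem_cons_of_mem _ (start_mem_support p)
    · exact List.mem_cons_of_mem _ (mem_support_of_mem_inc p h hx)

lemma edges_nodup_of_isPath : ∀ {a b : V} (w : G.Walk a b), w.IsPath → w.edges.Nodup
  | _, _, .nil _, _ => List.nodup_nil
  | _, _, .cons f hf p, h => by
    rw [IsPath, support_cons, List.nodup_cons] at h
    rw [edges_cons, List.nodup_cons]
    refine ⟨fun hmem => h.1 ?_, edges_nodup_of_isPath p h.2⟩
    exact mem_support_of_mem_inc p hmem (by rw [hf]; exact Sym2.mem_mk_left _ _)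

lemma exists_edge_end : ∀ {a b : V} (w : G.Walk a b), w.edges ≠ [] →
    ∃ g ∈ w.edges, b ∈ G.inc g
  | _, _, .nil _, h => absurd rfl h
  | _, _, .cons (v := v) f hf p, _ => by
    by_cases hp : p.edges = []
    · have hvb := eq_of_edges_eq_nil p hp
      subst hvb
      exact ⟨f, List.mem_cons_self, by rw [hf]; exact Sym2.mem_mk_right _ _⟩
    · obtain ⟨g, hg, hg2⟩ := exists_edge_end p hp
      exact ⟨g, List.mem_cons_of_mem _ hg, hg2⟩

def append : ∀ {a b c : V}, G.Walk a b → G.Walk b c → G.Walk a c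
  | _, _, _, .nil _, q => q
  | _, _, _, .cons e he p, q => .cons e he (p.append q)

@[simp] lemma edges_append : ∀ {a b c : V} (p : G.Walk a b) (q : G.Walk b c),
    (p.append q).edges = p.edges ++ q.edges
  | _, _, _, .nil _, q => rfl
  | _, _, _, .cons e he p, q => by
    show (Walk.cons e he (p.append q)).edges = _
    rw [edges_cons, edges_cons, edges_append p q, List.cons_append]

@[simp] lemma support_append : ∀ {a b c : V} (p : G.Walk a b) (q : G.Walk b c),
    (p.append q).support = p.support ++ q.support.tail
  | _, _, _, .nil _, q => (support_eq_cons q).trans rfl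
  | _, _, _, .cons e he p, q => by
    show (Walk.cons e he (p.append q)).support = _
    rw [support_cons, support_cons, support_append p q, List.cons_append]

def reverse : ∀ {a b : V}, G.Walk a b → G.Walk b a
  | _, _, .nil v => .nil v
  | _, _, .cons e he p => p.reverse.append (.cons e (he.trans (Sym2.eq_swap)) (.nil _))

@[simp] lemma edges_reverse : ∀ {a b : V} (w : G.Walk a b), w.reverse.edges = w.edges.reverse
  | _, _, .nil _ => rfl
  | _, _, .cons e he p => by
    show (p.reverse.append _).edges = _
    rw [edges_append, edges_reverse p, edges_cons, edges_nil, edges_cons, List.reverse_cons]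

lemma mid_sublist {α : Type*} (A B C : List α) (x : α) :
    (x :: B).Sublist (A ++ x :: (B ++ C)) :=
  (((B.sublist_append_left C).cons₂ x).trans (List.sublist_append_right A _))

lemma outer_sublist {α : Type*} (A B C : List α) (x : α) :
    (A ++ C).Sublist (A ++ x :: (B ++ C)) :=
  List.Sublist.append_left ((B.sublist_append_right C).cons x) A

/-- Split a walk at the first vertex satisfying `Q`. -/
lemma exists_split_first (Q : V → Prop) :
    ∀ {a b : V} (t : G.Walk a b), (∃ v ∈ t.support, Q v) →
    ∃ (z : V) (t₁ : G.Walk a z) (t₂ : G.Walk z b),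
      Q z ∧ (∀ w ∈ t₁.support, Q w → w = z) ∧ t₁.support.count z = 1 ∧
      t.edges = t₁.edges ++ t₂.edges ∧ t.support = t₁.support ++ t₂.support.tail := by
  classical
  intro a b t
  induction t with
  | nil v =>
    intro h
    obtain ⟨x, hx, hQ⟩ := h
    rw [support_nil, List.mem_singleton] at hx
    subst hx
    exact ⟨x, .nil x, .nil x, hQ, by simp, by simp, by simp, by simp⟩
  | @cons u v w e he p ih =>
    intro h
    by_cases hu : Q u
    · exact ⟨u, .nil u, .cons e he p, hu, by simp, by simp, by simp, by simp⟩
    · have hex : ∃ x ∈ p.support, Q x := by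
        obtain ⟨x, hx, hQ⟩ := h
        rw [support_cons, List.mem_cons] at hx
        rcases hx with rfl | hx
        · exact absurd hQ hu
        · exact ⟨x, hx, hQ⟩
      obtain ⟨z, t₁, t₂, hQz, hall, hcount, hed, hsup⟩ := ih hex
      have huz : u ≠ z := fun h' => hu (h' ▸ hQz)
      refine ⟨z, .cons e he t₁, t₂, hQz, ?_, ?_, ?_, ?_⟩
      · intro x hx hQx
        rw [support_cons, List.mem_cons] at hx
        rcases hx with rfl | hx
        · exact absurd hQx hu
        · exact hall x hx hQx
      · rw [support_cons, List.count_cons_of_ne huz, hcount]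
      · rw [edges_cons, edges_cons, hed, List.cons_append]
      · rw [support_cons, support_cons, hsup, List.cons_append]

/-- Extract a path from a walk, with edges among the walk's edges. -/
lemma exists_path_of_walk : ∀ (n : ℕ) {a b : V} (w : G.Walk a b), w.edges.length ≤ n →
    ∃ p : G.Walk a b, p.IsPath ∧ ∀ e ∈ p.edges, e ∈ w.edges := by
  classical
  intro n
  induction n with
  | zero =>
    intro a b w hw
    cases w with
    | nil => exact ⟨.nil _, by simp [IsPath], by simp⟩
    | cons e he p => simp at hw
  | succ n ih =>
    intro a b w hw
    by_cases hnd : w.support.Nodup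
    · exact ⟨w, hnd, fun _ h => h⟩
    · obtain ⟨x, hdup⟩ := List.exists_duplicate_iff_not_nodup.mpr hnd
      have hcount : 2 ≤ w.support.count x := List.duplicate_iff_two_le_count.mp hdup
      have hx : x ∈ w.support := hdup.mem
      obtain ⟨z, w₁, w₂, hz, _, hc1, hed, hsup⟩ :=
        exists_split_first (· = x) w ⟨x, hx, rfl⟩
      subst hz
      have hx2 : z ∈ w₂.support.tail := by
        by_contra hxx
        rw [hsup, List.count_append, hc1, List.count_eq_zero_of_not_mem hxx] at hcount
        omega
      cases w₂ with
      | nil => simp at hx2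
      | cons e₂ he₂ r =>
        rw [support_cons, List.tail_cons] at hx2
        obtain ⟨z', r₁, r₂, hz', _, _, hedr, _⟩ :=
          exists_split_first (· = z) r ⟨z, hx2, rfl⟩
        subst hz'
        have hlen : (w₁.append r₂).edges.length ≤ n := by
          have := hw
          rw [hed, edges_cons, hedr] at this
          rw [edges_append]
          simp only [List.length_append, List.length_cons] at this ⊢
          omega
        obtain ⟨p, hp, hpe⟩ := ih (w₁.append r₂) hlen
        refine ⟨p, hp, fun e hee => ?_⟩
        have := hpe e hee
        rw [edges_append] at this
        rw [hed, edges_cons, hedr]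
        rcases List.mem_append.mp this with h | h
        · exact List.mem_append_left _ h
        · exact List.mem_append_right _ (List.mem_cons_of_mem _ (List.mem_append_right _ h))

/-- Every vertex on a cycle is incident to two distinct edges of the cycle. -/
lemma cycle_two_incident (hG : G.Loopless) {u : V} (z : G.Walk u u) (hz : z.IsCycle)
    {x : V} (hx : x ∈ z.support) :
    ∃ e₁ e₂, e₁ ∈ z.edges ∧ e₂ ∈ z.edges ∧ e₁ ≠ e₂ ∧ x ∈ G.inc e₁ ∧ x ∈ G.inc e₂ := by
  obtain ⟨hne, hnd, htl⟩ := hz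
  cases z with
  | nil => exact absurd rfl hne
  | cons e he t =>
    rw [edges_cons, List.nodup_cons] at hnd
    by_cases hxu : x = u
    · subst hxu
      have htne : t.edges ≠ [] := by
        intro h
        have := eq_of_edges_eq_nil t h
        subst this
        exact hG e (by rw [he]; exact Sym2.mk_isDiag_iff.mpr rfl)
      obtain ⟨g, hg, hg2⟩ := exists_edge_end t htne
      exact ⟨e, g, List.mem_cons_self, List.mem_cons_of_mem _ hg,
        fun h => hnd.1 (h ▸ hg), by rw [he]; exact Sym2.mem_mk_left _ _, hg2⟩
    · have hxt : x ∈ t.support := by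
        rw [support_cons, List.mem_cons] at hx
        tauto
      obtain ⟨z', t₁, t₂, hz', _, _, hed, _⟩ :=
        exists_split_first (· = x) t ⟨x, hxt, rfl⟩
      subst hz'
      -- incoming edge: last edge of (cons e he t₁)
      have hin : ∃ g ∈ (Walk.cons e he t₁).edges, z' ∈ G.inc g :=
        exists_edge_end (Walk.cons e he t₁) (by simp)
      obtain ⟨g₁, hg₁, hg₁x⟩ := hin
      cases t₂ with
      | nil => exact absurd rfl hxu
      | cons e₂ he₂ r =>
        have hg₂x : z' ∈ G.inc e₂ := by rw [he₂]; exact Sym2.mem_mk_left _ _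
        rw [edges_cons, List.mem_cons] at hg₁
        have hnd2 : (t₁.edges ++ (Walk.cons e₂ he₂ r).edges).Nodup := hed ▸ hnd.2
        have hdisj := List.disjoint_of_nodup_append hnd2
        have he₂t : e₂ ∈ t.edges := by
          rw [hed, List.mem_append]
          exact Or.inr (List.mem_cons_self)
        rcases hg₁ with rfl | hg₁
        · exact ⟨g₁, e₂, List.mem_cons_self,
            List.mem_cons_of_mem _ he₂t, fun h => hnd.1 (h ▸ he₂t), hg₁x, hg₂x⟩
        · refine ⟨g₁, e₂, List.mem_cons_of_mem _ (by rw [hed]; exact List.mem_append_left _ hg₁),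
            List.mem_cons_of_mem _ he₂t, ?_, hg₁x, hg₂x⟩
          intro h
          exact hdisj hg₁ (h ▸ List.mem_cons_self)

/-- No cycle lives inside the edges of a path. -/
lemma no_cycle_in_path (hG : G.Loopless) : ∀ {a b : V} (P : G.Walk a b), P.IsPath →
    ∀ {u : V} (z : G.Walk u u), z.IsCycle → (∀ g ∈ z.edges, g ∈ P.edges) → False := by
  intro a b P
  induction P with
  | nil v =>
    intro _ u z hz hsub
    cases z with
    | nil => exact hz.1 rfl
    | cons g hg tz => exact absurd (hsub g (List.mem_cons_self)) (by simp)
  | @cons a v b e he t ih =>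
    intro hP u z hz hsub
    rw [IsPath, support_cons, List.nodup_cons] at hP
    by_cases hez : e ∈ z.edges
    · have hax : a ∈ z.support :=
        mem_support_of_mem_inc z hez (by rw [he]; exact Sym2.mem_mk_left _ _)
      obtain ⟨e₁, e₂, h₁, h₂, hne, hx₁, hx₂⟩ := cycle_two_incident hG z hz hax
      have key : ∀ g ∈ z.edges, a ∈ G.inc g → g = e := by
        intro g hg hag
        rcases List.mem_cons.mp (hsub g hg) with h | h
        · exact h
        · exact absurd (mem_support_of_mem_inc t h hag) hP.1
      exact hne ((key e₁ h₁ hx₁).trans (key e₂ h₂ hx₂).symm)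
    · refine ih hP.2 z hz (fun g hg => ?_)
      rcases List.mem_cons.mp (hsub g hg) with h | h
      · exact absurd (h ▸ hg) hez
      · exact h

/-- From a closed walk with no repeated edges, extract a cycle through a given edge. -/
lemma exists_cycle_through : ∀ (n : ℕ) {u : V} (c : G.Walk u u), c.edges.length ≤ n →
    c.edges.Nodup → ∀ {e : E}, e ∈ c.edges →
    ∃ (w : V) (z : G.Walk w w), z.IsCycle ∧ e ∈ z.edges ∧ ∀ g ∈ z.edges, g ∈ c.edges := by
  classical
  intro n
  induction n with
  | zero =>
    intro u c hlen _ e he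
    cases c with
    | nil => simp at he
    | cons f hf t => simp at hlen
  | succ n ih =>
    intro u c hlen hnd e he
    by_cases htl : c.support.tail.Nodup
    · exact ⟨u, c, ⟨fun h => by simp [h] at he, hnd, htl⟩, he, fun _ h => h⟩
    · cases c with
      | nil => simp at he
      | cons f hf t =>
        rw [support_cons, List.tail_cons] at htl
        obtain ⟨x, hdup⟩ := List.exists_duplicate_iff_not_nodup.mpr htl
        have hcount : 2 ≤ t.support.count x := List.duplicate_iff_two_le_count.mp hdup
        obtain ⟨z₁, t₁, t₂, hz₁, _, hc1, hed, hsup⟩ :=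
          exists_split_first (· = x) t ⟨x, hdup.mem, rfl⟩
        subst hz₁
        have hx2 : z₁ ∈ t₂.support.tail := by
          by_contra hxx
          rw [hsup, List.count_append, hc1, List.count_eq_zero_of_not_mem hxx] at hcount
          omega
        cases t₂ with
        | nil => simp at hx2
        | cons e₂ he₂ r =>
          rw [support_cons, List.tail_cons] at hx2
          obtain ⟨z₂, r₁, r₂, hz₂, _, _, hedr, _⟩ :=
            exists_split_first (· = z₁) r ⟨z₁, hx2, rfl⟩
          subst hz₂
          -- the closed walk d = cons e₂ r₁ : Walk x x, and c' = cons f (t₁.append r₂)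
          have hedc : (Walk.cons f hf t).edges = f :: (t₁.edges ++ e₂ :: (r₁.edges ++ r₂.edges)) := by
            rw [edges_cons, hed, edges_cons, hedr]
          have hsubd : (Walk.cons e₂ he₂ r₁).edges.Sublist (Walk.cons f hf t).edges := by
            rw [hedc, edges_cons]
            exact (mid_sublist _ _ _ _).cons _
          have hsubc' : (Walk.cons f hf (t₁.append r₂)).edges.Sublist (Walk.cons f hf t).edges := by
            rw [hedc, edges_cons, edges_append]
            exact (outer_sublist _ _ _ _).cons₂ _
          have hlenc' : (Walk.cons f hf (t₁.append r₂)).edges.length ≤ n := by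
            rw [hedc] at hlen
            simp only [edges_cons, edges_append, List.length_cons, List.length_append]
              at hlen ⊢
            omega
          have hlend : (Walk.cons e₂ he₂ r₁).edges.length ≤ n := by
            rw [hedc] at hlen
            simp only [edges_cons, List.length_cons, List.length_append] at hlen ⊢
            omega
          have useC' : e ∈ (Walk.cons f hf (t₁.append r₂)).edges →
              ∃ (w : V) (z : G.Walk w w), z.IsCycle ∧ e ∈ z.edges ∧
                ∀ g ∈ z.edges, g ∈ (Walk.cons f hf t).edges := by
            intro hmem
            obtain ⟨w, zz, h1, h2, h3⟩ := ih _ hlenc' (hsubc'.nodup hnd) hmem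
            exact ⟨w, zz, h1, h2, fun g hg => hsubc'.mem (h3 g hg)⟩
          have useD : e ∈ (Walk.cons e₂ he₂ r₁).edges →
              ∃ (w : V) (z : G.Walk w w), z.IsCycle ∧ e ∈ z.edges ∧
                ∀ g ∈ z.edges, g ∈ (Walk.cons f hf t).edges := by
            intro hmem
            obtain ⟨w, zz, h1, h2, h3⟩ := ih _ hlend (hsubd.nodup hnd) hmem
            exact ⟨w, zz, h1, h2, fun g hg => hsubd.mem (h3 g hg)⟩
          rcases List.mem_cons.mp (hedc ▸ he) with he' | hmem
          · exact useC' (by rw [edges_cons]; exact he' ▸ List.mem_cons_self)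
          · rcases List.mem_append.mp hmem with hm | hm
            · exact useC' (by
                rw [edges_cons, edges_append]
                exact List.mem_cons_of_mem _ (List.mem_append_left _ hm))
            · rcases List.mem_cons.mp hm with he' | hm'
              · exact useD (by rw [edges_cons]; exact he' ▸ List.mem_cons_self)
              · rcases List.mem_append.mp hm' with hm2 | hm2
                · exact useD (by
                    rw [edges_cons]
                    exact List.mem_cons_of_mem _ hm2)
                · exact useC' (by
                    rw [edges_cons, edges_append]
                    exact List.mem_cons_of_mem _ (List.mem_append_right _ hm2))

private lemma one_le_count {α : Type*} [DecidableEq α] {x : α} {l : List α} (h : x ∈ l) :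
    1 ≤ l.count x :=
  Nat.one_le_iff_ne_zero.mpr (fun h0 => (List.count_eq_zero.mp h0) h)

private lemma count_le_one_of_nodup {α : Type*} [DecidableEq α] {x : α} {l : List α}
    (h : l.Nodup) : l.count x ≤ 1 := by
  by_cases hm : x ∈ l
  · exact le_of_eq (List.count_eq_one_of_mem h hm)
  · simp [List.count_eq_zero.mpr hm]

private lemma sym2_isDiag_of_forall {α : Type*} {z : Sym2 α} {c : α}
    (h : ∀ x ∈ z, x = c) : z.IsDiag := by
  induction z using Sym2.ind with
  | _ x y =>
    rw [Sym2.mk_isDiag_iff, h x (Sym2.mem_mk_left _ _), h y (Sym2.mem_mk_right _ _)]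

/-- Chunk decomposition: a walk between `S`-vertices containing a good edge `g`
contains a subwalk between `S`-vertices all of whose edges are good. -/
lemma exists_chunk (hG : G.Loopless) (S : V → Prop) (bad : E → Prop)
    (hbad : ∀ h : E, bad h → ∀ x ∈ G.inc h, S x) :
    ∀ (n : ℕ) {a b : V} (wk : G.Walk a b), wk.edges.length ≤ n → S a → S b →
    ∀ {g : E}, g ∈ wk.edges → ¬ bad g →
    ∃ (x y : V) (P : G.Walk x y) (W₁ : G.Walk a x) (W₂ : G.Walk y b),
      S x ∧ S y ∧ (∀ h ∈ P.edges, ¬ bad h) ∧ g ∈ P.edges ∧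
      wk.edges = W₁.edges ++ P.edges ++ W₂.edges ∧
      wk.support = W₁.support ++ P.support.tail ++ W₂.support.tail := by
  intro n
  induction n with
  | zero =>
    intro a b wk hlen _ _ g hg _
    cases wk with
    | nil => simp at hg
    | cons e he p => simp at hlen
  | succ n ih =>
    intro a b wk hlen hSa hSb g hg hgood
    cases wk with
    | nil => simp at hg
    | cons e' he' t =>
      obtain ⟨z, t₁, t₂, hSz, hall, hc1, hed, hsup⟩ :=
        exists_split_first S t ⟨b, end_mem_support t, hSb⟩
      have hkt : ∀ h ∈ t₁.edges, ¬ bad h := by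
        intro h hh hbadh
        refine hG h (sym2_isDiag_of_forall (c := z) ?_)
        intro x hx
        exact hall x (mem_support_of_mem_inc t₁ hh hx) (hbad h hbadh x hx)
      rw [edges_cons, List.mem_cons, hed, List.mem_append] at hg
      rcases hg with rfl | hg'
      · -- g = e' : chunk is  cons g t₁
        refine ⟨a, z, Walk.cons g he' t₁, .nil a, t₂, hSa, hSz, ?_, List.mem_cons_self,
          ?_, ?_⟩
        · intro h hh
          rcases List.mem_cons.mp hh with rfl | hh'
          · exact hgood
          · exact hkt h hh'
        · rw [edges_cons, hed]; simp
        · rw [support_cons, hsup]; simp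
      · rcases hg' with hg1 | hg2
        · -- g in t₁ : chunk is  cons e' t₁;  e' cannot be bad
          have ht₁ne : t₁.edges ≠ [] := fun h0 => by simp [h0] at hg1
          have hne' : ¬ bad e' := by
            intro hbe
            have hvS : S _ := hbad e' hbe _ (by rw [he']; exact Sym2.mem_mk_right _ _)
            have hvz := hall _ (start_mem_support t₁) hvS
            cases t₁ with
            | nil => exact ht₁ne rfl
            | cons e₃ he₃ t₃ =>
              have h1 : z ∈ t₃.support := end_mem_support t₃
              have h2 := one_le_count h1
              rw [support_cons, hvz, List.count_cons_self] at hc1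
              omega
          refine ⟨a, z, Walk.cons e' he' t₁, .nil a, t₂, hSa, hSz, ?_, ?_, ?_, ?_⟩
          · intro h hh
            rcases List.mem_cons.mp hh with rfl | hh'
            · exact hne'
            · exact hkt h hh'
          · exact List.mem_cons_of_mem _ hg1
          · rw [edges_cons, hed]; simp
          · rw [support_cons, hsup]; simp
        · -- g in t₂ : recurse
          have hlen2 : t₂.edges.length ≤ n := by
            rw [edges_cons, hed] at hlen
            simp only [List.length_cons, List.length_append] at hlen
            omega
          obtain ⟨x, y, P, W₁', W₂', hSx, hSy, hPg, hgP, hEq, hSup⟩ :=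
            ih t₂ hlen2 hSz hSb hg2 hgood
          refine ⟨x, y, P, Walk.cons e' he' (t₁.append W₁'), W₂', hSx, hSy, hPg, hgP, ?_, ?_⟩
          · rw [edges_cons, edges_cons, edges_append, hed, hEq]
            simp [List.append_assoc]
          · rw [support_cons, support_cons, support_append, hsup, hSup]
            rw [support_eq_cons W₁']
            simp [List.append_assoc]

/-- Key lemma: two cycles sharing an edge but not equal yield two distinct
3-edge-connected vertices. -/
lemma key_cycles (hG : G.Loopless) {up wq : V} (p : G.Walk up up) (q : G.Walk wq wq)
    (hp : p.IsCycle) (hq : q.IsCycle) {e f : E}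
    (hep : e ∈ p.edges) (heq : e ∈ q.edges) (hfp : f ∈ p.edges) (hfq : f ∉ q.edges) :
    ∃ x y : V, x ≠ y ∧ ThreePaths G x y := by
  classical
  set S : V → Prop := fun v => v ∈ q.support with hS
  set bad : E → Prop := fun h => h ∈ q.edges with hB
  have hbad : ∀ h : E, bad h → ∀ x ∈ G.inc h, S x := fun h hh x hx =>
    mem_support_of_mem_inc q hh hx
  -- x₀ : an endpoint of e
  have hx₀e : (G.inc e).out.1 ∈ G.inc e := Sym2.out_fst_mem _
  set x₀ := (G.inc e).out.1 with hx₀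
  have hx₀p : x₀ ∈ p.support := mem_support_of_mem_inc p hep hx₀e
  have hSx₀ : S x₀ := mem_support_of_mem_inc q heq hx₀e
  -- rotate p at x₀
  obtain ⟨z, w₁, w₂, hz, _, _, hedp, hsupp⟩ := exists_split_first (· = x₀) p ⟨x₀, hx₀p, rfl⟩
  subst hz
  obtain ⟨r, hr⟩ : ∃ r : G.Walk x₀ x₀, r = w₂.append w₁ := ⟨_, rfl⟩
  have hedr : r.edges = w₂.edges ++ w₁.edges := by rw [hr]; exact edges_append _ _
  have hperm : r.edges.Perm p.edges := by
    rw [hedr, hedp]; exact List.perm_append_comm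
  have hrnodup : r.edges.Nodup := hperm.nodup_iff.mpr hp.2.1
  have hrne : r.edges ≠ [] := by
    intro h0
    have h' := hperm
    rw [h0] at h'
    exact hp.1 h'.nil_eq.symm
  have hrtail : r.support.tail.Nodup := by
    have h1 : r.support.tail = w₂.support.tail ++ w₁.support.tail := by
      rw [hr, support_append, support_eq_cons w₂]; simp
    have h2 : p.support.tail = w₁.support.tail ++ w₂.support.tail := by
      rw [hsupp, support_eq_cons w₁]; simp
    have := hp.2.2
    rw [h2] at this
    rw [h1]
    exact (List.perm_append_comm.nodup_iff).mpr this
  have hfr : f ∈ r.edges := hperm.mem_iff.mpr hfp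
  have her : e ∈ r.edges := hperm.mem_iff.mpr hep
  obtain ⟨x, y, P, W₁, W₂, hSx, hSy, hPg, hgP, hEq, hSup⟩ :=
    exists_chunk hG S bad hbad r.edges.length r le_rfl hSx₀ hSx₀ hfr hfq
  by_cases hxy : x = y
  · -- impossible : the chunk would be all of r
    exfalso
    subst hxy
    have hx₀tail : x₀ ∈ r.support.tail := by
      cases r with
      | nil => simp at hrne
      | cons e₃ he₃ t₃ => exact end_mem_support_tail _ _ _
    have htot : r.support.count x₀ = 2 := by
      rw [support_eq_cons r, List.count_cons_self,
        List.count_eq_one_of_mem hrtail hx₀tail]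
    have hcnt : r.support.count x =
        (W₁.support.count x + P.support.tail.count x) + W₂.support.tail.count x := by
      rw [hSup, List.count_append, List.count_append]
    have hPW : 1 ≤ P.support.tail.count x := by
      cases P with
      | nil => simp at hgP
      | cons e₃ he₃ t₃ => exact one_le_count (end_mem_support_tail _ _ _)
    have hW₁c : 1 ≤ W₁.support.count x := one_le_count (end_mem_support W₁)
    have hxx₀ : x = x₀ := by
      by_contra hne
      have : r.support.count x ≤ 1 := by
        rw [support_eq_cons r, List.count_cons_of_ne (Ne.symm hne)]
        exact count_le_one_of_nodup hrtail
      omega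
    subst hxx₀
    have hW₁nil : W₁.edges = [] := by
      cases W₁ with
      | nil => simp
      | cons e₃ he₃ t₃ =>
        exfalso
        have h1 : x₀ ∈ (Walk.cons e₃ he₃ t₃).support.tail := end_mem_support_tail _ _ _
        have h2 := one_le_count h1
        rw [support_cons, List.tail_cons] at h2
        rw [support_cons, List.count_cons_self] at hcnt
        omega
    have hW₂nil : W₂.edges = [] := by
      cases W₂ with
      | nil => simp
      | cons e₃ he₃ t₃ =>
        exfalso
        have h1 : x₀ ∈ (Walk.cons e₃ he₃ t₃).support.tail := end_mem_support_tail _ _ _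
        have h2 := one_le_count h1
        rw [support_cons, List.tail_cons] at h2
        rw [support_cons, List.tail_cons] at hcnt
        omega
    rw [hW₁nil, hW₂nil, List.nil_append, List.append_nil] at hEq
    exact hPg e (hEq ▸ her) heq
  · -- build three edge-disjoint walks from x to y, then three paths
    have hxq : x ∈ q.support := hSx
    have hyq : y ∈ q.support := hSy
    obtain ⟨x', q₁, q₂, hx', _, _, hedq, hsupq⟩ := exists_split_first (· = x) q ⟨x, hxq, rfl⟩
    have hx'e : x = x' := hx'.symm
    subst hx'e
    obtain ⟨q', hq'⟩ : ∃ r : G.Walk x x, r = q₂.append q₁ := ⟨_, rfl⟩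
    have hpermq : q'.edges.Perm q.edges := by
      rw [hq', edges_append, hedq]; exact List.perm_append_comm
    have hq'nodup : q'.edges.Nodup := hpermq.nodup_iff.mpr hq.2.1
    have hyq' : y ∈ q'.support := by
      have hqne : q.edges ≠ [] := hq.1
      have hwqtail : wq ∈ q.support.tail := by
        cases q with
        | nil => simp at hqne
        | cons e₃ he₃ t₃ => exact end_mem_support_tail _ _ _
      have htails : q.support.tail.Perm q'.support.tail := by
        have h1 : q'.support.tail = q₂.support.tail ++ q₁.support.tail := by
          rw [hq', support_append, support_eq_cons q₂]; simp
        have h2 : q.support.tail = q₁.support.tail ++ q₂.support.tail := by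
          rw [hsupq, support_eq_cons q₁]; simp
        rw [h1, h2]
        exact List.perm_append_comm
      rcases List.mem_cons.mp (support_eq_cons q ▸ hyq) with rfl | hytail
      · exact List.mem_of_mem_tail (htails.mem_iff.mp hwqtail)
      · exact List.mem_of_mem_tail (htails.mem_iff.mp hytail)
    obtain ⟨y', A₁, A₂, hy', _, _, hedq', _⟩ := exists_split_first (· = y) q' ⟨y, hyq', rfl⟩
    have hy'e : y = y' := hy'.symm
    subst hy'e
    -- A₁ : Walk x y, A₂ : Walk y x
    have hA₁q : ∀ h ∈ A₁.edges, h ∈ q.edges := by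
      intro h hh
      exact hpermq.mem_iff.mp (hedq' ▸ List.mem_append_left _ hh)
    have hA₂q : ∀ h ∈ A₂.reverse.edges, h ∈ q.edges := by
      intro h hh
      rw [edges_reverse, List.mem_reverse] at hh
      exact hpermq.mem_iff.mp (hedq' ▸ List.mem_append_right _ hh)
    have hdisjA : ∀ h ∈ A₁.edges, h ∉ A₂.reverse.edges := by
      intro h h1 h2
      rw [edges_reverse, List.mem_reverse] at h2
      exact List.disjoint_of_nodup_append (hedq' ▸ hq'nodup) h1 h2
    obtain ⟨p₁, hp₁, hp₁e⟩ := exists_path_of_walk P.edges.length P le_rfl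
    obtain ⟨p₂, hp₂, hp₂e⟩ := exists_path_of_walk A₁.edges.length A₁ le_rfl
    obtain ⟨p₃, hp₃, hp₃e⟩ := exists_path_of_walk A₂.reverse.edges.length A₂.reverse le_rfl
    refine ⟨x, y, hxy, p₁, p₂, p₃, hp₁, hp₂, hp₃, ?_, ?_, ?_⟩
    · intro h h1 h2
      exact hPg h (hp₁e h h1) (hA₁q h (hp₂e h h2))
    · intro h h1 h2
      exact hPg h (hp₁e h h1) (hA₂q h (hp₃e h h2))
    · intro h h1 h2
      exact hdisjA h (hp₂e h h1) (hp₃e h h2)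

end Multigraph.Walk


theorem cactus_iff_no_threePaths' {V E : Type}
    (G : Multigraph V E) (hG : G.Loopless) :
    G.IsCactus ↔ ∀ u v : V, u ≠ v → ¬ ThreePaths G u v := by
  classical
  constructor
  · intro hc u v huv h3
    obtain ⟨p₁, p₂, p₃, h₁, h₂, h₃, d₁₂, d₁₃, d₂₃⟩ := h3
    cases p₁ with
    | nil => exact huv rfl
    | cons e₁ he₁ t₁ =>
      have hn₁ := Walk.edges_nodup_of_isPath _ h₁
      have hn₂ := Walk.edges_nodup_of_isPath _ h₂
      have hn₃ := Walk.edges_nodup_of_isPath _ h₃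
      have hc₂nd : ((Walk.cons e₁ he₁ t₁).append p₂.reverse).edges.Nodup := by
        rw [Walk.edges_append, Walk.edges_reverse]
        exact List.Nodup.append hn₁ (List.nodup_reverse.mpr hn₂)
          (fun a ha hb => d₁₂ a ha (List.mem_reverse.mp hb))
      have hc₃nd : ((Walk.cons e₁ he₁ t₁).append p₃.reverse).edges.Nodup := by
        rw [Walk.edges_append, Walk.edges_reverse]
        exact List.Nodup.append hn₁ (List.nodup_reverse.mpr hn₃)
          (fun a ha hb => d₁₃ a ha (List.mem_reverse.mp hb))
      have he₁c₂ : e₁ ∈ ((Walk.cons e₁ he₁ t₁).append p₂.reverse).edges := by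
        rw [Walk.edges_append]
        exact List.mem_append_left _ (List.mem_cons_self)
      have he₁c₃ : e₁ ∈ ((Walk.cons e₁ he₁ t₁).append p₃.reverse).edges := by
        rw [Walk.edges_append]
        exact List.mem_append_left _ (List.mem_cons_self)
      obtain ⟨w₁, z₁, hz₁, he₁z₁, hsub₁⟩ :=
        Walk.exists_cycle_through _ _ le_rfl hc₂nd he₁c₂
      obtain ⟨w₂, z₂, hz₂, he₁z₂, hsub₂⟩ :=
        Walk.exists_cycle_through _ _ le_rfl hc₃nd he₁c₃
      have hCs₁ : {g : E | g ∈ z₁.edges} ∈ G.cycleSets := ⟨w₁, z₁, hz₁, rfl⟩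
      have hCs₂ : {g : E | g ∈ z₂.edges} ∈ G.cycleSets := ⟨w₂, z₂, hz₂, rfl⟩
      have heqC : {g : E | g ∈ z₁.edges} = {g : E | g ∈ z₂.edges} := by
        by_contra hne
        have hdis := hc _ hCs₁ _ hCs₂ hne
        have hmem : e₁ ∈ ({g : E | g ∈ z₁.edges} ∩ {g : E | g ∈ z₂.edges} : Set E) :=
          ⟨he₁z₁, he₁z₂⟩
        rw [hdis] at hmem
        exact hmem
      have hsubp₁ : ∀ g ∈ z₁.edges, g ∈ (Walk.cons e₁ he₁ t₁).edges := by
        intro g hg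
        have hg2 : g ∈ z₂.edges := (Set.ext_iff.mp heqC g).mp hg
        have hmem₂ := hsub₁ g hg
        have hmem₃ := hsub₂ g hg2
        rw [Walk.edges_append, List.mem_append, Walk.edges_reverse, List.mem_reverse]
          at hmem₂ hmem₃
        rcases hmem₂ with hA | hA
        · exact hA
        · rcases hmem₃ with hB | hB
          · exact hB
          · exact absurd hB (d₂₃ _ hA)
      exact Walk.no_cycle_in_path hG _ h₁ z₁ hz₁ hsubp₁
  · intro h C₁ hC₁ C₂ hC₂ hne
    obtain ⟨u, p, hp, rfl⟩ := hC₁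
    obtain ⟨w, q, hq, rfl⟩ := hC₂
    by_contra hint
    obtain ⟨e, hep, heq⟩ := Set.nonempty_iff_ne_empty.mpr hint
    have hnall : ¬ ∀ g : E, g ∈ p.edges ↔ g ∈ q.edges :=
      fun hAll => hne (Set.ext fun g => hAll g)
    obtain ⟨f, hf⟩ := not_forall.mp hnall
    by_cases hfp : f ∈ p.edges
    · have hfq : f ∉ q.edges := fun hq' => hf ⟨fun _ => hq', fun _ => hfp⟩
      obtain ⟨x, y, hxy, h3⟩ := Walk.key_cycles hG p q hp hq hep heq hfp hfq
      exact h x y hxy h3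
    · have hfq : f ∈ q.edges := by
        by_contra hfq
        exact hf ⟨fun h' => absurd h' hfp, fun h' => absurd h' hfq⟩
      obtain ⟨x, y, hxy, h3⟩ := Walk.key_cycles hG q p hq hp heq hep hfq hfp
      exact h x y hxy h3


/-- G is a cactus iff no two distinct vertices are 3-edge-connected. -/
theorem cactus_iff_no_threePaths {V E : Type} [Finite V] [Finite E]
    (G : Multigraph V E) (hG : G.Loopless) :
    G.IsCactus ↔ ∀ u v : V, u ≠ v → ¬ ThreePaths G u v :=
  cactus_iff_no_threePaths' G hG

end TCW
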